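/- Let B be a bimonoid in a braided monoidal category C whose shear morphism sh_B is an isomorphism, with inverse σ : B ⊗ B → B ⊗ B. Then the morphism S := λ_B ∘ (ε ⊗ id_B) ∘ σ ∘ (id_B ⊗ η) ∘ ρ_B⁻¹ : B → B is an antipode for B, so B is a Hopf monoid in C. -/

import Mathlib

open CategoryTheory MonoidalCategory

universe v u

variable {C : Type u} [Category.{v} C] [MonoidalCategory C] [BraidedCategory C]

/-- The shear morphism `(id_B ⊗ m) ∘ α ∘ (Δ ⊗ id_B) : B ⊗ B ⟶ B ⊗ B` of a bimonoid `B`. -/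
noncomputable def Bimon_.shear (B : Bimon C) : B.X.X ⊗ B.X.X ⟶ B.X.X ⊗ B.X.X :=
  ((ComonObj.comul (self := Comon.comon B)).hom ▷ B.X.X) ≫ (α_ B.X.X B.X.X B.X.X).hom ≫ (B.X.X ◁ MonObj.mul (X := B.X.X))

open scoped MonObj ComonObj

theorem Bimon_.shear_def (B : Bimon C) : Bimon_.shear B
    = (Δ[B.X.X] ▷ B.X.X) ≫ (α_ B.X.X B.X.X B.X.X).hom ≫ (B.X.X ◁ μ[B.X.X]) := rfl

namespace Bimon_

variable (B : Bimon C)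

/-- shear is a right module map -/
theorem shear_module :
    (shear B ▷ B.X.X) ≫ (α_ B.X.X B.X.X B.X.X).hom ≫ (B.X.X ◁ μ[B.X.X])
      = (α_ B.X.X B.X.X B.X.X).hom ≫ (B.X.X ◁ μ[B.X.X]) ≫ shear B := by
  rw [shear_def]
  simp only [comp_whiskerRight, Category.assoc]
  slice_lhs 3 4 => rw [associator_naturality_middle]
  slice_lhs 4 5 => rw [← MonoidalCategory.whiskerLeft_comp, MonObj.mul_assoc,
    MonoidalCategory.whiskerLeft_comp, MonoidalCategory.whiskerLeft_comp]
  slice_lhs 2 4 => rw [pentagon]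
  slice_rhs 2 3 => rw [whisker_exchange]
  slice_rhs 3 4 => rw [associator_naturality_right]
  slice_rhs 1 2 => rw [← associator_naturality_left]
  simp

/-- shear is a left comodule map -/
theorem shear_comodule :
    (Δ[B.X.X] ▷ B.X.X) ≫ (α_ B.X.X B.X.X B.X.X).hom ≫ (B.X.X ◁ shear B)
      = shear B ≫ (Δ[B.X.X] ▷ B.X.X) ≫ (α_ B.X.X B.X.X B.X.X).hom := by
  rw [shear_def]
  simp only [MonoidalCategory.whiskerLeft_comp, Category.assoc]
  slice_lhs 2 3 => rw [← associator_naturality_middle]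
  slice_lhs 1 2 => rw [← comp_whiskerRight, ComonObj.comul_assoc, comp_whiskerRight,
    comp_whiskerRight]
  slice_lhs 3 5 => rw [pentagon]
  slice_rhs 3 4 => rw [whisker_exchange]
  slice_rhs 4 5 => rw [associator_naturality_right]
  slice_rhs 2 3 => rw [← associator_naturality_left]
  simp

/-- counit property of the shear map -/
theorem shear_counit :
    shear B ≫ (ε[B.X.X] ▷ B.X.X) ≫ (λ_ B.X.X).hom = μ[B.X.X] := by
  rw [shear_def]
  slice_lhs 3 4 => rw [whisker_exchange]
  slice_lhs 4 5 => rw [leftUnitor_naturality]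
  slice_lhs 2 3 => rw [← associator_naturality_left]
  slice_lhs 3 4 => rw [← leftUnitor_whiskerRight]
  slice_lhs 1 2 => rw [← comp_whiskerRight, ComonObj.counit_comul]
  simp


theorem unit_coaction :
    (ρ_ B.X.X).inv ≫ (B.X.X ◁ η[B.X.X]) ≫ (Δ[B.X.X] ▷ B.X.X) ≫ (α_ B.X.X B.X.X B.X.X).hom
      = Δ[B.X.X] ≫ (B.X.X ◁ ((ρ_ B.X.X).inv ≫ (B.X.X ◁ η[B.X.X]))) := by
  slice_lhs 2 3 => rw [whisker_exchange]
  slice_lhs 1 2 => rw [← rightUnitor_inv_naturality]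
  slice_lhs 3 4 => rw [associator_naturality_right]
  rw [MonoidalCategory.whiskerLeft_comp]
  congr 1
  rw [rightUnitor_tensor_inv]
  simp

/-- unit property of the shear map -/
theorem unit_shear :
    (ρ_ B.X.X).inv ≫ (B.X.X ◁ η[B.X.X]) ≫ shear B = Δ[B.X.X] := by
  rw [shear_def]
  slice_lhs 1 4 => rw [unit_coaction]
  slice_lhs 2 3 => rw [← MonoidalCategory.whiskerLeft_comp, Category.assoc, MonObj.mul_one]
  simp

/-- the coaction is counital -/
theorem coaction_counit :
    (Δ[B.X.X] ▷ B.X.X) ≫ (α_ B.X.X B.X.X B.X.X).hom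
      ≫ (B.X.X ◁ ((ε[B.X.X] ▷ B.X.X) ≫ (λ_ B.X.X).hom)) = 𝟙 _ := by
  rw [MonoidalCategory.whiskerLeft_comp]
  slice_lhs 2 3 => rw [← associator_naturality_middle]
  slice_lhs 3 4 => rw [triangle]
  slice_lhs 1 2 => rw [← comp_whiskerRight]
  rw [← comp_whiskerRight]
  have h : Δ[B.X.X] ≫ (B.X.X ◁ ε[B.X.X]) ≫ (ρ_ B.X.X).hom = 𝟙 _ := by
    rw [ComonObj.comul_counit_assoc]; simp
  rw [Category.assoc, h]
  simp

theorem unit_counit_unitors :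
    (ρ_ B.X.X).inv ≫ (B.X.X ◁ η[B.X.X]) ≫ (ε[B.X.X] ▷ B.X.X) ≫ (λ_ B.X.X).hom
      = ε[B.X.X] ≫ η[B.X.X] := by
  slice_lhs 2 3 => rw [whisker_exchange]
  slice_lhs 3 4 => rw [leftUnitor_naturality]
  slice_lhs 1 2 => rw [← rightUnitor_inv_naturality]
  rw [unitors_equal]
  simp

theorem module_counit :
    (α_ B.X.X B.X.X B.X.X).hom ≫ (B.X.X ◁ μ[B.X.X]) ≫ (ε[B.X.X] ▷ B.X.X) ≫ (λ_ B.X.X).hom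
      = (((ε[B.X.X] ▷ B.X.X) ≫ (λ_ B.X.X).hom) ▷ B.X.X) ≫ μ[B.X.X] := by
  slice_lhs 2 3 => rw [whisker_exchange]
  slice_lhs 3 4 => rw [leftUnitor_naturality]
  slice_lhs 1 2 => rw [← associator_naturality_left]
  slice_lhs 2 3 => rw [← leftUnitor_whiskerRight]
  simp

variable (σ : B.X.X ⊗ B.X.X ⟶ B.X.X ⊗ B.X.X)

section
variable (hσ₁ : shear B ≫ σ = 𝟙 (B.X.X ⊗ B.X.X)) (hσ₂ : σ ≫ shear B = 𝟙 (B.X.X ⊗ B.X.X))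

include hσ₁ hσ₂ in
theorem sigma_module :
    (σ ▷ B.X.X) ≫ (α_ B.X.X B.X.X B.X.X).hom ≫ (B.X.X ◁ μ[B.X.X])
      = (α_ B.X.X B.X.X B.X.X).hom ≫ (B.X.X ◁ μ[B.X.X]) ≫ σ := by
  have h := congrArg (fun t => (σ ▷ B.X.X) ≫ t ≫ σ) (shear_module B)
  simp only [Category.assoc] at h
  rw [hσ₁, Category.comp_id, ← comp_whiskerRight_assoc, hσ₂] at h
  simpa using h.symm

include hσ₁ hσ₂ in
theorem sigma_comodule :
    σ ≫ (Δ[B.X.X] ▷ B.X.X) ≫ (α_ B.X.X B.X.X B.X.X).hom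
      = (Δ[B.X.X] ▷ B.X.X) ≫ (α_ B.X.X B.X.X B.X.X).hom ≫ (B.X.X ◁ σ) := by
  have h := congrArg (fun t => σ ≫ t ≫ (B.X.X ◁ σ)) (shear_comodule B)
  simp only [Category.assoc] at h
  rw [← MonoidalCategory.whiskerLeft_comp, hσ₁, MonoidalCategory.whiskerLeft_id,
    Category.comp_id, reassoc_of% hσ₂] at h
  simpa using h

end

section
variable (hσ₁ : shear B ≫ σ = 𝟙 (B.X.X ⊗ B.X.X)) (hσ₂ : σ ≫ shear B = 𝟙 (B.X.X ⊗ B.X.X))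

include hσ₂ in
theorem sigma_counit :
    σ ≫ μ[B.X.X] = (ε[B.X.X] ▷ B.X.X) ≫ (λ_ B.X.X).hom := by
  conv_lhs => rw [← shear_counit B, reassoc_of% hσ₂]

include hσ₁ in
theorem comul_sigma :
    Δ[B.X.X] ≫ σ = (ρ_ B.X.X).inv ≫ (B.X.X ◁ η[B.X.X]) := by
  conv_rhs => rw [← Category.comp_id (B.X.X ◁ η[B.X.X]), ← hσ₁, ← Category.assoc,
    ← Category.assoc, Category.assoc _ _ (shear B), unit_shear]

end

end Bimon_

/-- The morphism `S := λ_B ∘ (ε ⊗ id_B) ∘ σ ∘ (id_B ⊗ η) ∘ ρ_B⁻¹ : B ⟶ B` built from an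
inverse `σ` of the shear morphism of a bimonoid `B`. -/
noncomputable def Bimon_.antipodeOfShearInv (B : Bimon C)
    (σ : B.X.X ⊗ B.X.X ⟶ B.X.X ⊗ B.X.X) : B.X.X ⟶ B.X.X :=
  (ρ_ B.X.X).inv ≫ (B.X.X ◁ MonObj.one (X := B.X.X)) ≫ σ ≫ ((ComonObj.counit (self := Comon.comon B)).hom ▷ B.X.X) ≫ (λ_ B.X.X).hom

theorem Bimon_.antipodeOfShearInv_def (B : Bimon C) (σ : B.X.X ⊗ B.X.X ⟶ B.X.X ⊗ B.X.X) :
    Bimon_.antipodeOfShearInv B σ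
      = (ρ_ B.X.X).inv ≫ (B.X.X ◁ η[B.X.X]) ≫ σ ≫ (ε[B.X.X] ▷ B.X.X) ≫ (λ_ B.X.X).hom := rfl

namespace Bimon_

variable (B : Bimon C) (σ : B.X.X ⊗ B.X.X ⟶ B.X.X ⊗ B.X.X)
variable (hσ₁ : shear B ≫ σ = 𝟙 (B.X.X ⊗ B.X.X)) (hσ₂ : σ ≫ shear B = 𝟙 (B.X.X ⊗ B.X.X))

-- `(S ▷ X) ≫ m = g` where `g = σ ≫ (ε ▷ X) ≫ λ`.
include hσ₁ hσ₂ in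
theorem antipodeOfShearInv_whiskerRight_mul :
    (antipodeOfShearInv B σ ▷ B.X.X) ≫ μ[B.X.X]
      = σ ≫ (ε[B.X.X] ▷ B.X.X) ≫ (λ_ B.X.X).hom := by
  rw [antipodeOfShearInv_def]
  simp only [comp_whiskerRight, Category.assoc]
  -- ((σ ≫ (ε ▷ X) ≫ λ) ▷ X) ≫ m = α ≫ (X ◁ m) ≫ σ ≫ (ε ▷ X) ≫ λ
  have hg : ((σ ≫ (ε[B.X.X] ▷ B.X.X) ≫ (λ_ B.X.X).hom) ▷ B.X.X) ≫ μ[B.X.X]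
      = (α_ B.X.X B.X.X B.X.X).hom ≫ (B.X.X ◁ μ[B.X.X]) ≫ σ
          ≫ (ε[B.X.X] ▷ B.X.X) ≫ (λ_ B.X.X).hom := by
    conv_rhs => rw [← reassoc_of% (sigma_module B σ hσ₁ hσ₂)]
    rw [module_counit]
    simp
  simp only [comp_whiskerRight, Category.assoc] at hg
  slice_lhs 3 7 => rw [hg]
  -- now kill (ρ⁻¹ ▷ X) ≫ ((X ◁ η) ▷ X) ≫ α ≫ (X ◁ m)
  slice_lhs 2 3 => rw [associator_naturality_middle]
  slice_lhs 3 4 => rw [← MonoidalCategory.whiskerLeft_comp, MonObj.one_mul]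
  slice_lhs 2 3 => rw [triangle]
  slice_lhs 1 2 => rw [← comp_whiskerRight]
  simp

-- The key formula `σ = (Δ ▷ X) ≫ α ≫ (X ◁ (σ ≫ (ε ▷ X) ≫ λ))`.
include hσ₁ hσ₂ in
theorem sigma_eq :
    σ = (Δ[B.X.X] ▷ B.X.X) ≫ (α_ B.X.X B.X.X B.X.X).hom
          ≫ (B.X.X ◁ (σ ≫ (ε[B.X.X] ▷ B.X.X) ≫ (λ_ B.X.X).hom)) := by
  conv_lhs => rw [← Category.comp_id σ, ← coaction_counit B, reassoc_of%
    (sigma_comodule B σ hσ₁ hσ₂)]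
  simp [MonoidalCategory.whiskerLeft_comp]

end Bimon_

namespace Bimon_

variable (B : Bimon C) (σ : B.X.X ⊗ B.X.X ⟶ B.X.X ⊗ B.X.X)
variable (hσ₁ : shear B ≫ σ = 𝟙 (B.X.X ⊗ B.X.X)) (hσ₂ : σ ≫ shear B = 𝟙 (B.X.X ⊗ B.X.X))

include hσ₁ hσ₂ in
theorem antipodeOfShearInv_left :
    Δ[B.X.X] ≫ (antipodeOfShearInv B σ ▷ B.X.X) ≫ μ[B.X.X]
      = ε[B.X.X] ≫ η[B.X.X] := by
  rw [antipodeOfShearInv_whiskerRight_mul B σ hσ₁ hσ₂, reassoc_of% (comul_sigma B σ hσ₁)]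
  exact unit_counit_unitors B

include hσ₁ hσ₂ in
theorem antipodeOfShearInv_right :
    Δ[B.X.X] ≫ (B.X.X ◁ antipodeOfShearInv B σ) ≫ μ[B.X.X]
      = ε[B.X.X] ≫ η[B.X.X] := by
  have h0 : (ρ_ B.X.X).inv ≫ (B.X.X ◁ η[B.X.X]) ≫ σ ≫ μ[B.X.X]
      = ε[B.X.X] ≫ η[B.X.X] := by
    conv_lhs => rw [← shear_counit B, reassoc_of% hσ₂]
    exact unit_counit_unitors B
  rw [← h0]
  conv_rhs => rw [sigma_eq B σ hσ₁ hσ₂]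
  simp only [Category.assoc]
  conv_rhs => rw [reassoc_of% (unit_coaction B), ← MonoidalCategory.whiskerLeft_comp_assoc]
  rw [antipodeOfShearInv_def]
  simp

end Bimon_

/-- If the shear morphism of a bimonoid `B` in a braided monoidal category is an isomorphism,
with inverse `σ`, then `S := λ_B ∘ (ε ⊗ id_B) ∘ σ ∘ (id_B ⊗ η) ∘ ρ_B⁻¹` is an antipode for `B`,
so that `B` is (underlies) a Hopf monoid in `C`. -/
theorem Bimon_.antipodeOfShearInv_is_antipode (B : Bimon C)
    (σ : B.X.X ⊗ B.X.X ⟶ B.X.X ⊗ B.X.X)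
    (hσ₁ : Bimon_.shear B ≫ σ = 𝟙 (B.X.X ⊗ B.X.X)) (hσ₂ : σ ≫ Bimon_.shear B = 𝟙 (B.X.X ⊗ B.X.X)) :
    ((ComonObj.comul (self := Comon.comon B)).hom ≫ (Bimon_.antipodeOfShearInv B σ ▷ B.X.X) ≫ MonObj.mul (X := B.X.X) = (ComonObj.counit (self := Comon.comon B)).hom ≫ MonObj.one (X := B.X.X) ∧
      (ComonObj.comul (self := Comon.comon B)).hom ≫ (B.X.X ◁ Bimon_.antipodeOfShearInv B σ) ≫ MonObj.mul (X := B.X.X) = (ComonObj.counit (self := Comon.comon B)).hom ≫ MonObj.one (X := B.X.X)) ∧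
    ∃ H : Hopf C, H.toBimon = B := by
  have hl := antipodeOfShearInv_left B σ hσ₁ hσ₂
  have hr := antipodeOfShearInv_right B σ hσ₁ hσ₂
  exact ⟨⟨hl, hr⟩, ⟨@Hopf.mk C _ _ _ B.X.X
    { (inferInstance : BimonObj B.X.X) with
      antipode := antipodeOfShearInv B σ, antipode_left := hl, antipode_right := hr }, rfl⟩⟩
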